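/- Define a(z) = (1/(4π²)) ∫_{T²} sin²(p₁) / (E₀(p) − z) dp for z < 0, where E₀(p) = 2(1 − cos p₁) + 2(1 − cos p₂) and T² = [−π, π)². Then lim_{z → 0⁻} a(z) = (π − 2)/(2π). -/

import Mathlib

open Real MeasureTheory Filter

/-- The two-dimensional torus realized as the square `[-π, π) × [-π, π)`. -/
def torus2 : Set (ℝ × ℝ) := Set.Ico (-π) π ×ˢ Set.Ico (-π) π

/-- The dispersion relation at zero quasimomentum. -/
noncomputable def E0 (p : ℝ × ℝ) : ℝ :=
  2 * (1 - Real.cos p.1) + 2 * (1 - Real.cos p.2)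

lemma inner_antideriv {a : ℝ} (ha : 2 < a) (y : ℝ) :
    HasDerivAt (fun y : ℝ =>
      (y + 2 * Real.arctan (2 * Real.sin y / (a + Real.sqrt (a^2-4) - 2 * Real.cos y)))
        / Real.sqrt (a^2-4)) (a - 2 * Real.cos y)⁻¹ y := by
  set s := Real.sqrt (a^2-4) with hs
  have hs2 : s^2 = a^2 - 4 := Real.sq_sqrt (by nlinarith)
  have hspos : 0 < s := Real.sqrt_pos.2 (by nlinarith)
  have hv : ∀ t : ℝ, 0 < a + s - 2 * Real.cos t := by
    intro t
    have := Real.cos_le_one t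
    nlinarith
  have hu : HasDerivAt (fun t : ℝ => 2 * Real.sin t) (2 * Real.cos y) y :=
    (Real.hasDerivAt_sin y).const_mul 2
  have hvd : HasDerivAt (fun t : ℝ => a + s - 2 * Real.cos t) (2 * Real.sin y) y := by
    have := ((Real.hasDerivAt_cos y).const_mul 2).const_sub (a + s)
    simpa using this
  have hq : HasDerivAt (fun t : ℝ => 2 * Real.sin t / (a + s - 2 * Real.cos t))
      ((2 * Real.cos y * (a + s - 2 * Real.cos y) - 2 * Real.sin y * (2 * Real.sin y))
        / (a + s - 2 * Real.cos y)^2) y :=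
    hu.div hvd (ne_of_gt (hv y))
  have harc : HasDerivAt (fun t : ℝ =>
      Real.arctan (2 * Real.sin t / (a + s - 2 * Real.cos t)))
      (1 / (1 + (2 * Real.sin y / (a + s - 2 * Real.cos y))^2) *
        ((2 * Real.cos y * (a + s - 2 * Real.cos y) - 2 * Real.sin y * (2 * Real.sin y))
          / (a + s - 2 * Real.cos y)^2)) y :=
    (Real.hasDerivAt_arctan _).comp y hq
  have hsum := ((hasDerivAt_id y).add (harc.const_mul 2)).div_const s
  refine hsum.congr_deriv (Eq.symm ?_)
  set c := Real.cos y
  set si := Real.sin y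
  have hpy : si^2 = 1 - c^2 := by
    have := Real.sin_sq_add_cos_sq y; linarith [this]
  have hden : (0:ℝ) < a - 2 * c := by have : c ≤ 1 := Real.cos_le_one y; nlinarith
  have hvy : (0:ℝ) < a + s - 2 * c := hv y
  -- key simplification of the arctan derivative factor
  have key : 1 / (1 + (2 * si / (a + s - 2*c))^2) *
      ((2 * c * (a + s - 2*c) - 2 * si * (2 * si)) / (a + s - 2*c)^2)
      = (2*(a+s)*c - 4) / (2*(a+s)*(a - 2*c)) := by
    have h1 : (a + s - 2*c)^2 + (2*si)^2 = 2*(a+s)*(a-2*c) := by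
      linear_combination hpy * 4 + hs2
    have hne : (a + s - 2*c) ≠ 0 := ne_of_gt hvy
    have hne2 : 2*(a+s)*(a-2*c) ≠ 0 := by positivity
    have e : 1 / (1 + (2 * si / (a + s - 2*c))^2) *
        ((2 * c * (a + s - 2*c) - 2 * si * (2 * si)) / (a + s - 2*c)^2)
        = (2 * c * (a + s - 2*c) - 2 * si * (2 * si)) / ((a + s - 2*c)^2 + (2*si)^2) := by
      field_simp
    rw [e, h1]
    congr 1
    linear_combination (-4) * hpy
  rw [key]
  have hne3 : (a+s) ≠ 0 := by positivity
  rw [eq_div_iff (ne_of_gt hspos)]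
  field_simp
  linear_combination ((a - 2*c) * (a+s) + (-4*c + 2*s*c + 2*a + 2*a*c - a*s - a^2) + (1 - 2*a + 4*c)) * hs2

lemma inner_integral {a : ℝ} (ha : 2 < a) :
    ∫ y in (-π)..π, (a - 2 * Real.cos y)⁻¹ = 2 * π / Real.sqrt (a^2-4) := by
  have hcont : Continuous fun y : ℝ => (a - 2 * Real.cos y)⁻¹ := by
    apply Continuous.inv₀ (by continuity)
    intro y
    have := Real.cos_le_one y
    nlinarith
  have := intervalIntegral.integral_eq_sub_of_hasDerivAt
    (fun y _ => inner_antideriv ha y) (hcont.intervalIntegrable (-π) π)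
  rw [this]
  have hspos : 0 < Real.sqrt (a^2-4) := Real.sqrt_pos.2 (by nlinarith)
  rw [Real.sin_pi, Real.sin_neg, Real.sin_pi]
  simp only [neg_zero, mul_zero, zero_div, Real.arctan_zero, mul_zero, add_zero]
  field_simp
  ring

noncomputable def phi (x : ℝ) : ℝ :=
  2 * π * Real.cos (x/2)^2 * Real.sin (x/2) / Real.sqrt (2 - Real.cos (x/2)^2)

lemma outer_antideriv (x : ℝ) :
    HasDerivAt (fun x : ℝ =>
      2 * π * (Real.cos (x/2) * Real.sqrt (2 - Real.cos (x/2)^2))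
        - 4 * π * Real.arcsin (Real.cos (x/2) / Real.sqrt 2)) (phi x) x := by
  have hc : HasDerivAt (fun t : ℝ => Real.cos (t/2)) (-Real.sin (x/2) / 2) x := by
    have h1 : HasDerivAt (fun t : ℝ => t/2) (1/2 : ℝ) x := (hasDerivAt_id x).div_const 2
    have := (Real.hasDerivAt_cos (x/2)).comp x h1
    refine this.congr_deriv (Eq.symm ?_); ring
  set c := Real.cos (x/2) with hcdef
  set si := Real.sin (x/2) with hsidef
  have hc1 : c ≤ 1 := Real.cos_le_one _
  have hc2 : -1 ≤ c := Real.neg_one_le_cos _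
  have hpos : (0:ℝ) < 2 - c^2 := by nlinarith
  have hw : (0:ℝ) < Real.sqrt (2 - c^2) := Real.sqrt_pos.2 hpos
  have hw2 : Real.sqrt (2 - c^2)^2 = 2 - c^2 := Real.sq_sqrt (le_of_lt hpos)
  have h2 : Real.sqrt 2 ^ 2 = 2 := Real.sq_sqrt (by norm_num)
  have hs2 : (0:ℝ) < Real.sqrt 2 := by positivity
  have hin : HasDerivAt (fun t : ℝ => 2 - Real.cos (t/2)^2)
      (-(2 * c ^ 1 * (-si / 2))) x := ((hc.pow 2)).const_sub 2
  have hsqrt : HasDerivAt (fun t : ℝ => Real.sqrt (2 - Real.cos (t/2)^2))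
      (1 / (2 * Real.sqrt (2 - c^2)) * (-(2 * c ^ 1 * (-si / 2)))) x :=
    (Real.hasDerivAt_sqrt (ne_of_gt hpos)).comp x hin
  have hprod : HasDerivAt (fun t : ℝ =>
      2 * π * (Real.cos (t/2) * Real.sqrt (2 - Real.cos (t/2)^2)))
      (2 * π * ((-si / 2) * Real.sqrt (2 - c^2)
        + c * (1 / (2 * Real.sqrt (2 - c^2)) * (-(2 * c ^ 1 * (-si / 2)))))) x :=
    (hc.mul hsqrt).const_mul (2 * π)
  have harg : HasDerivAt (fun t : ℝ => Real.cos (t/2) / Real.sqrt 2)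
      ((-si / 2) / Real.sqrt 2) x := hc.div_const _
  have hsqrt2_gt : (1:ℝ) < Real.sqrt 2 := by nlinarith
  have hne1 : c / Real.sqrt 2 ≠ -1 := by
    intro h
    rw [div_eq_iff (ne_of_gt hs2)] at h
    nlinarith
  have hne2 : c / Real.sqrt 2 ≠ 1 := by
    intro h
    rw [div_eq_iff (ne_of_gt hs2)] at h
    nlinarith
  have harcsin : HasDerivAt (fun t : ℝ => Real.arcsin (Real.cos (t/2) / Real.sqrt 2))
      ((1 / Real.sqrt (1 - (c / Real.sqrt 2)^2)) * ((-si / 2) / Real.sqrt 2)) x :=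
    HasDerivAt.comp x (Real.hasDerivAt_arcsin hne1 hne2) harg
  have hq : Real.sqrt (1 - (c / Real.sqrt 2)^2) = Real.sqrt (2 - c^2) / Real.sqrt 2 := by
    have heq : 1 - (c / Real.sqrt 2)^2 = (2 - c^2) / 2 := by
      rw [div_pow, h2]; ring
    rw [heq, Real.sqrt_div hpos.le]
  have htot := hprod.sub (harcsin.const_mul (4 * π))
  refine htot.congr_deriv (Eq.symm ?_)
  rw [hq]
  unfold phi
  rw [← hcdef, ← hsidef]
  field_simp
  ring_nf
  linear_combination (2 * si) * hw2

lemma phi_cont : Continuous phi := by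
  unfold phi
  apply Continuous.div (by continuity) (by continuity)
  intro x
  have h1 : Real.cos (x/2) ≤ 1 := Real.cos_le_one _
  have h2 : -1 ≤ Real.cos (x/2) := Real.neg_one_le_cos _
  exact ne_of_gt (Real.sqrt_pos.2 (by nlinarith))

lemma arcsin_sqrt2 : Real.arcsin (Real.sqrt 2)⁻¹ = π / 4 := by
  have h2 : Real.sqrt 2 * Real.sqrt 2 = 2 := Real.mul_self_sqrt (by norm_num)
  have hpos : (0:ℝ) < Real.sqrt 2 := by positivity
  have h : (Real.sqrt 2)⁻¹ = Real.sqrt 2 / 2 := by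
    field_simp
    rw [sq, h2]
  rw [h, ← Real.sin_pi_div_four, Real.arcsin_sin (by linarith [Real.pi_pos]) (by linarith [Real.pi_pos])]

lemma integral_phi_pos : ∫ x in (0:ℝ)..π, phi x = π^2 - 2*π := by
  rw [intervalIntegral.integral_eq_sub_of_hasDerivAt (fun x _ => outer_antideriv x)
    (phi_cont.intervalIntegrable 0 π)]
  norm_num [Real.cos_pi_div_two, Real.cos_zero, Real.arcsin_zero]
  rw [arcsin_sqrt2]
  ring

/-- The absolute-value version of phi (even). -/
noncomputable def Phi (x : ℝ) : ℝ :=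
  2 * π * Real.cos (x/2)^2 * |Real.sin (x/2)| / Real.sqrt (2 - Real.cos (x/2)^2)

lemma Phi_even (x : ℝ) : Phi (-x) = Phi x := by
  unfold Phi
  rw [show -x/2 = -(x/2) by ring, Real.cos_neg, Real.sin_neg, abs_neg]

lemma Phi_eq_phi_on_pos {x : ℝ} (h0 : 0 ≤ x) (hπ : x ≤ π) : Phi x = phi x := by
  unfold Phi phi
  rw [abs_of_nonneg (Real.sin_nonneg_of_nonneg_of_le_pi (by linarith) (by linarith [Real.pi_pos]))]

lemma Phi_cont : Continuous Phi := by
  unfold Phi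
  apply Continuous.div (by continuity) (by continuity)
  intro x
  have h1 : Real.cos (x/2) ≤ 1 := Real.cos_le_one _
  have h2 : -1 ≤ Real.cos (x/2) := Real.neg_one_le_cos _
  exact ne_of_gt (Real.sqrt_pos.2 (by nlinarith))

lemma integral_Phi : ∫ x in (-π)..π, Phi x = 2*π^2 - 4*π := by
  have hsplit : ∫ x in (-π)..π, Phi x
      = (∫ x in (-π)..(0:ℝ), Phi x) + ∫ x in (0:ℝ)..π, Phi x := by
    rw [intervalIntegral.integral_add_adjacent_intervals] <;>
      exact (Phi_cont.intervalIntegrable _ _)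
  have hpos : ∫ x in (0:ℝ)..π, Phi x = π^2 - 2*π := by
    rw [← integral_phi_pos]
    apply intervalIntegral.integral_congr
    intro x hx
    rw [Set.uIcc_of_le (by linarith [Real.pi_pos])] at hx
    exact Phi_eq_phi_on_pos hx.1 hx.2
  have hneg : ∫ x in (-π)..(0:ℝ), Phi x = π^2 - 2*π := by
    have := intervalIntegral.integral_comp_neg (a := 0) (b := π) Phi
    simp only [neg_zero] at this
    rw [← this]
    rw [← hpos]
    apply intervalIntegral.integral_congr
    intro x _
    exact Phi_even x
  rw [hsplit, hpos, hneg]; ring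

lemma sqrt_term_eq (x : ℝ) :
    Real.sqrt ((4 - 2*Real.cos x)^2 - 4)
      = 4 * |Real.sin (x/2)| * Real.sqrt (2 - Real.cos (x/2)^2) := by
  have hc : Real.cos x = 1 - 2 * Real.sin (x/2)^2 := by
    have h := Real.cos_two_mul (x/2)
    rw [show 2*(x/2) = x by ring] at h
    have := Real.sin_sq_add_cos_sq (x/2)
    linarith
  have hpy : Real.sin (x/2)^2 = 1 - Real.cos (x/2)^2 := by
    have := Real.sin_sq_add_cos_sq (x/2); linarith
  have h1 : Real.cos (x/2) ≤ 1 := Real.cos_le_one _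
  have h2 : -1 ≤ Real.cos (x/2) := Real.neg_one_le_cos _
  have key : (4 - 2*Real.cos x)^2 - 4
      = (4 * |Real.sin (x/2)| * Real.sqrt (2 - Real.cos (x/2)^2))^2 := by
    have hs : Real.sqrt (2 - Real.cos (x/2)^2)^2 = 2 - Real.cos (x/2)^2 :=
      Real.sq_sqrt (by nlinarith)
    have ha : |Real.sin (x/2)|^2 = Real.sin (x/2)^2 := sq_abs _
    rw [mul_pow, mul_pow, hs, ha, hc]
    linear_combination (16 - 16 * Real.cos (x/2)^2 + 32*Real.sin (x/2)^2 - 16*(Real.sin (x/2)^2 + 1 - Real.cos (x/2)^2)) * hpy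
  rw [key, Real.sqrt_sq (by positivity)]

lemma inner_value (x : ℝ) :
    Real.sin x ^ 2 * (2*π / Real.sqrt ((4 - 2*Real.cos x)^2 - 4)) = Phi x := by
  rw [sqrt_term_eq]
  have hsinx : Real.sin x = 2 * Real.sin (x/2) * Real.cos (x/2) := by
    have := Real.sin_two_mul (x/2)
    rw [show 2*(x/2) = x by ring] at this
    linarith
  unfold Phi
  rcases eq_or_ne (Real.sin (x/2)) 0 with h | h
  · simp [hsinx, h]
  · have habs : 0 < |Real.sin (x/2)| := abs_pos.2 h
    have h1 : Real.cos (x/2) ≤ 1 := Real.cos_le_one _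
    have h2 : -1 ≤ Real.cos (x/2) := Real.neg_one_le_cos _
    have hsq : 0 < Real.sqrt (2 - Real.cos (x/2)^2) := Real.sqrt_pos.2 (by nlinarith)
    have habs2 : |Real.sin (x/2)|^2 = Real.sin (x/2)^2 := sq_abs _
    rw [hsinx]
    field_simp
    linear_combination (-4 * Real.cos (x/2)^2) * habs2

lemma E0_nonneg (p : ℝ × ℝ) : 0 ≤ E0 p := by
  unfold E0
  have := Real.cos_le_one p.1
  have := Real.cos_le_one p.2
  nlinarith

lemma sin_sq_le_E0 (p : ℝ × ℝ) : Real.sin p.1 ^ 2 ≤ E0 p := by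
  unfold E0
  have h1 := Real.sin_sq_add_cos_sq p.1
  have := Real.cos_le_one p.1
  have := Real.neg_one_le_cos p.1
  have := Real.cos_le_one p.2
  nlinarith

lemma torus2_meas : MeasurableSet torus2 :=
  (measurableSet_Ico).prod (measurableSet_Ico)

lemma torus2_finite : volume torus2 < ⊤ := by
  rw [torus2, Measure.volume_eq_prod, Measure.prod_prod, Real.volume_Ico]
  exact ENNReal.mul_lt_top ENNReal.ofReal_lt_top ENNReal.ofReal_lt_top

lemma meas_quot (z : ℝ) : Measurable fun p : ℝ × ℝ => Real.sin p.1 ^ 2 / (E0 p - z) := by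
  apply Measurable.div
  · exact ((Real.continuous_sin.comp continuous_fst).pow 2).measurable
  · apply Measurable.sub _ measurable_const
    unfold E0
    exact (((continuous_const.mul (continuous_const.sub (Real.continuous_cos.comp continuous_fst))).add
      (continuous_const.mul (continuous_const.sub (Real.continuous_cos.comp continuous_snd)))).measurable)

lemma norm_quot_le (z : ℝ) (hz : z ≤ 0) (p : ℝ × ℝ) :
    ‖Real.sin p.1 ^ 2 / (E0 p - z)‖ ≤ 1 := by
  rcases eq_or_lt_of_le (by linarith [E0_nonneg p] : (0:ℝ) ≤ E0 p - z) with h | h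
  · rw [← h]; simp
  · rw [Real.norm_eq_abs, abs_div, abs_of_nonneg (sq_nonneg _), abs_of_pos h]
    rw [div_le_one h]
    linarith [sin_sq_le_E0 p]

lemma integrableOn_quot (z : ℝ) (hz : z ≤ 0) :
    IntegrableOn (fun p : ℝ × ℝ => Real.sin p.1 ^ 2 / (E0 p - z)) torus2 := by
  apply Integrable.mono' (g := fun _ => (1:ℝ))
  · exact integrableOn_const torus2_finite.ne
  · exact (meas_quot z).aestronglyMeasurable
  · exact Filter.Eventually.of_forall fun p => norm_quot_le z hz p

lemma cos_lt_one_of {x : ℝ} (hx : x ∈ Set.Ico (-π) π) (hx0 : x ≠ 0) : Real.cos x < 1 := by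
  rcases lt_or_eq_of_le (Real.cos_le_one x) with h | h
  · exact h
  · exfalso
    have hpi := Real.pi_pos
    have := (Real.cos_eq_one_iff_of_lt_of_lt (x := x) (by linarith [hx.1]) (by linarith [hx.2])).1 h
    exact hx0 this

lemma inner_slice {x : ℝ} (hx : x ∈ Set.Ico (-π) π) (hx0 : x ≠ 0) :
    ∫ y in Set.Ico (-π) π, Real.sin x ^ 2 / (E0 (x, y)) = Phi x := by
  have ha : 2 < 4 - 2 * Real.cos x := by
    have := cos_lt_one_of hx hx0; linarith
  have hE : ∀ y : ℝ, E0 (x, y) = (4 - 2*Real.cos x) - 2 * Real.cos y := by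
    intro y; unfold E0; ring
  calc ∫ y in Set.Ico (-π) π, Real.sin x ^ 2 / (E0 (x, y))
      = ∫ y in Set.Ico (-π) π, Real.sin x ^ 2 * ((4 - 2*Real.cos x) - 2 * Real.cos y)⁻¹ := by
        apply setIntegral_congr_fun measurableSet_Ico
        intro y _
        simp only [hE y, div_eq_mul_inv]
    _ = ∫ y in (-π)..π, Real.sin x ^ 2 * ((4 - 2*Real.cos x) - 2 * Real.cos y)⁻¹ := by
        rw [intervalIntegral.integral_of_le (by linarith [Real.pi_pos]),
          setIntegral_congr_set Ico_ae_eq_Ioc]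
    _ = Real.sin x ^ 2 * ∫ y in (-π)..π, ((4 - 2*Real.cos x) - 2 * Real.cos y)⁻¹ := by
        rw [← intervalIntegral.integral_const_mul]
    _ = Real.sin x ^ 2 * (2 * π / Real.sqrt ((4 - 2*Real.cos x)^2 - 4)) := by
        rw [inner_integral ha]
    _ = Phi x := inner_value x

lemma ae_ne_zero : ∀ᵐ x : ℝ, x ≠ 0 := by
  have : volume ({(0:ℝ)} : Set ℝ) = 0 := measure_singleton 0
  rw [ae_iff]
  convert this using 2
  ext x
  simp

lemma key_integral :
    ∫ p in torus2, Real.sin p.1 ^ 2 / E0 p = 2*π^2 - 4*π := by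
  have hint : IntegrableOn (fun p : ℝ × ℝ => Real.sin p.1 ^ 2 / (E0 p - 0)) torus2 :=
    integrableOn_quot 0 le_rfl
  simp only [sub_zero] at hint
  have h1 : ∫ p in torus2, Real.sin p.1 ^ 2 / E0 p
      = ∫ x in Set.Ico (-π) π, ∫ y in Set.Ico (-π) π, Real.sin x ^ 2 / E0 (x, y) := by
    rw [torus2] at hint ⊢
    rw [Measure.volume_eq_prod] at hint ⊢
    exact setIntegral_prod _ hint
  rw [h1]
  have h2 : ∫ x in Set.Ico (-π) π, (∫ y in Set.Ico (-π) π, Real.sin x ^ 2 / E0 (x, y))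
      = ∫ x in Set.Ico (-π) π, Phi x := by
    apply setIntegral_congr_ae measurableSet_Ico
    filter_upwards [ae_ne_zero] with x hx0 hx
    exact inner_slice hx hx0
  rw [h2, setIntegral_congr_set Ico_ae_eq_Ioc,
    ← intervalIntegral.integral_of_le (by linarith [Real.pi_pos])]
  exact integral_Phi

theorem tendsto_a_at_zero_from_below :
    Tendsto
      (fun z : ℝ =>
        (1 / (4 * π ^ 2)) *
          ∫ p in torus2, (Real.sin p.1) ^ 2 / (E0 p - z))
      (nhdsWithin 0 (Set.Iio 0)) (nhds ((π - 2) / (2 * π))) := by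
  have hpi := Real.pi_pos
  have hmain : Tendsto
      (fun z : ℝ => ∫ p in torus2, (Real.sin p.1) ^ 2 / (E0 p - z))
      (nhdsWithin 0 (Set.Iio 0)) (nhds (∫ p in torus2, (Real.sin p.1) ^ 2 / E0 p)) := by
    apply MeasureTheory.tendsto_integral_filter_of_dominated_convergence (bound := fun _ => (1:ℝ))
    · exact Filter.Eventually.of_forall fun z =>
        ((meas_quot z).aestronglyMeasurable).restrict
    · filter_upwards [self_mem_nhdsWithin] with z hz
      exact Filter.Eventually.of_forall fun p => norm_quot_le z (le_of_lt hz) p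
    · exact integrableOn_const torus2_finite.ne
    · -- pointwise limit, a.e.
      rw [ae_restrict_iff' torus2_meas]
      have hsing : volume ({((0:ℝ),(0:ℝ))} : Set (ℝ × ℝ)) = 0 := by
        have : ({((0:ℝ),(0:ℝ))} : Set (ℝ × ℝ)) = ({0} : Set ℝ) ×ˢ ({0} : Set ℝ) := by
          ext p; simp [Prod.ext_iff]
        rw [this, Measure.volume_eq_prod, Measure.prod_prod, Real.volume_singleton]
        simp
      rw [ae_iff]
      apply measure_mono_null _ hsing
      intro p hp
      simp only [Set.mem_setOf_eq, not_forall] at hp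
      obtain ⟨hmem, hlim⟩ := hp
      -- show p = (0,0); otherwise the limit holds
      by_contra hne
      apply hlim
      have hE0 : 0 < E0 p := by
        rcases lt_or_eq_of_le (E0_nonneg p) with h | h
        · exact h
        · exfalso
          have h1 : Real.cos p.1 = 1 ∧ Real.cos p.2 = 1 := by
            unfold E0 at h
            constructor <;> nlinarith [Real.cos_le_one p.1, Real.cos_le_one p.2]
          have hp1 : p.1 = 0 :=
            (Real.cos_eq_one_iff_of_lt_of_lt (by linarith [hmem.1.1]) (by linarith [hmem.1.2])).1 h1.1
          have hp2 : p.2 = 0 :=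
            (Real.cos_eq_one_iff_of_lt_of_lt (by linarith [hmem.2.1]) (by linarith [hmem.2.2])).1 h1.2
          exact hne (by simp [Set.mem_singleton_iff, Prod.ext_iff, hp1, hp2])
      have hden : Tendsto (fun z : ℝ => E0 p - z) (nhdsWithin 0 (Set.Iio 0)) (nhds (E0 p)) := by
        have : Tendsto (fun z : ℝ => E0 p - z) (nhds 0) (nhds (E0 p - 0)) :=
          (continuous_const.sub continuous_id).tendsto 0
        rw [sub_zero] at this
        exact this.mono_left nhdsWithin_le_nhds
      exact (tendsto_const_nhds.div hden (ne_of_gt hE0))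
  rw [key_integral] at hmain
  have := hmain.const_mul (1 / (4 * π ^ 2))
  convert this using 2
  field_simp
  ring
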